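/- If A is a nonsingular matrix with the inverse cyclic property and B = A^{-1}, then a_{ii}b_{ii} = d/(d-c) for every i, where d is the product of diagonal entries of A and c is the cyclic product; in particular a_{ii}b_{ii} = a_{i+1,i+1}b_{i+1,i+1} for all 1 ≤ i ≤ n-1. -/

import Mathlib

open Matrix Finset

/-- A matrix (of order ≥ 2) has the *inverse cyclic property* if all its diagonal
entries are nonzero and the three cyclic entry conditions hold. -/
def InvCyclic {n : ℕ} (A : Matrix (Fin (n + 2)) (Fin (n + 2)) ℝ) : Prop :=
  (∀ i, A i i ≠ 0) ∧
  (∀ i k j : Fin (n + 2), i < k → k < j → A i j = A i k * A k j / A k k) ∧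
  (∀ i j : Fin (n + 2), j < i → i ≠ Fin.last (n + 1) →
    A i j = A i (Fin.last (n + 1)) * A (Fin.last (n + 1)) j /
      A (Fin.last (n + 1)) (Fin.last (n + 1))) ∧
  (∀ j : Fin (n + 2), j < Fin.last (n + 1) →
    A (Fin.last (n + 1)) j = A (Fin.last (n + 1)) 0 * A 0 j / A 0 0)

/-- `d`, the product of the diagonal entries. -/
def diagProd {n : ℕ} (A : Matrix (Fin (n + 2)) (Fin (n + 2)) ℝ) : ℝ := ∏ i, A i i

/-- `c`, the cyclic product `a₁₂a₂₃⋯a_{(n-1)n}a_{n1}`. -/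
def cycProd {n : ℕ} (A : Matrix (Fin (n + 2)) (Fin (n + 2)) ℝ) : ℝ :=
  ∏ i : Fin (n + 2), A i (i + 1)

section Aux

open Fin.NatCast

variable {n : ℕ} (A : Matrix (Fin (n + 2)) (Fin (n + 2)) ℝ)

lemma aux_chain3 (hfull : ∀ i j, A i j ≠ 0)
    (h2 : ∀ i k j : Fin (n + 2), i < k → k < j → A i j = A i k * A k j / A k k) :
    ∀ a b c : Fin (n + 2), a ≤ b → b ≤ c → A a b * A b c = A a c * A b b := by
  intro a b c hab hbc
  rcases eq_or_lt_of_le hab with rfl | hab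
  · ring
  rcases eq_or_lt_of_le hbc with rfl | hbc
  · ring
  rw [h2 a b c hab hbc, div_mul_cancel₀ _ (hfull b b)]

lemma aux_h3' (hfull : ∀ i j, A i j ≠ 0) (hic : InvCyclic A) :
    ∀ i j : Fin (n + 2), j < i → i ≠ Fin.last (n + 1) →
      A i j * A (Fin.last (n + 1)) (Fin.last (n + 1))
        = A i (Fin.last (n + 1)) * A (Fin.last (n + 1)) j := by
  intro i j hji hi
  rw [hic.2.2.1 i j hji hi, div_mul_cancel₀ _ (hfull _ _)]

lemma aux_h4' (hfull : ∀ i j, A i j ≠ 0) (hic : InvCyclic A) :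
    ∀ j : Fin (n + 2), j < Fin.last (n + 1) →
      A (Fin.last (n + 1)) j * A 0 0 = A (Fin.last (n + 1)) 0 * A 0 j := by
  intro j hj
  rw [hic.2.2.2 j hj, div_mul_cancel₀ _ (hfull _ _)]

lemma aux_key1 (hfull : ∀ i j, A i j ≠ 0) (hic : InvCyclic A) :
    ∀ i k : Fin (n + 2), i ≠ k + 1 → A i (k + 1) * A k k = A i k * A k (k + 1) := by
  obtain ⟨hd, h2, h3, h4⟩ := hic
  intro i k hik
  by_cases hk : k = Fin.last (n + 1)
  · subst hk
    rw [Fin.last_add_one] at hik ⊢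
    by_cases hi : i = Fin.last (n + 1)
    · subst hi; ring
    · rw [h3 i 0 (Fin.pos_of_ne_zero hik) hi, div_mul_cancel₀ _ (hd _)]
  · have hkL : k < Fin.last (n + 1) := lt_of_le_of_ne (Fin.le_last k) hk
    have hk1 : k < k + 1 := Fin.lt_add_one_iff.mpr hkL
    rcases lt_trichotomy i k with hik2 | rfl | hik2
    · rw [h2 i k (k + 1) hik2 hk1, div_mul_cancel₀ _ (hd k)]
    · ring
    · have hv1 : (k + 1).val = k.val + 1 := Fin.val_add_one_of_lt hkL
      have hki : k + 1 < i := by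
        have h2' : k.val < i.val := hik2
        have h3' : k.val + 1 ≠ i.val := by
          intro h
          exact hik (Fin.ext (by rw [hv1, h])).symm
        rw [Fin.lt_def, hv1]
        omega
      have hiL : k + 1 < Fin.last (n + 1) := lt_of_lt_of_le hki (Fin.le_last i)
      have hc := aux_chain3 A hfull h2 0 k (k + 1) (Fin.zero_le k) (le_of_lt hk1)
      have e1 := aux_h4' A hfull ⟨hd, h2, h3, h4⟩ (k + 1) hiL
      have e2 := aux_h4' A hfull ⟨hd, h2, h3, h4⟩ k hkL
      have hG : A (Fin.last (n + 1)) (k + 1) * A k k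
          = A (Fin.last (n + 1)) k * A k (k + 1) := by
        apply mul_right_cancel₀ (hfull 0 0)
        linear_combination A k k * e1 - A k (k + 1) * e2
          - A (Fin.last (n + 1)) 0 * hc
      by_cases hi : i = Fin.last (n + 1)
      · subst hi; exact hG
      · have e3 := aux_h3' A hfull ⟨hd, h2, h3, h4⟩ i (k + 1) hki hi
        have e4 := aux_h3' A hfull ⟨hd, h2, h3, h4⟩ i k hik2 hi
        apply mul_right_cancel₀ (hfull (Fin.last (n + 1)) (Fin.last (n + 1)))
        linear_combination A k k * e3 - A k (k + 1) * e4
          + A i (Fin.last (n + 1)) * hG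

lemma aux_key2 (hfull : ∀ i j, A i j ≠ 0) (hic : InvCyclic A) :
    ∀ k : Fin (n + 2),
      A (k + 1) k * A k (k + 1) * (A 0 0 * A (Fin.last (n + 1)) (Fin.last (n + 1)))
        = A (Fin.last (n + 1)) 0 * A 0 (Fin.last (n + 1)) * A (k + 1) (k + 1) * A k k := by
  intro k
  obtain ⟨hd, h2, h3, h4⟩ := hic
  by_cases hk : k = Fin.last (n + 1)
  · subst hk
    rw [Fin.last_add_one]
    ring
  · have hkL : k < Fin.last (n + 1) := lt_of_le_of_ne (Fin.le_last k) hk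
    have hk1 : k < k + 1 := Fin.lt_add_one_iff.mpr hkL
    have e4 := aux_h4' A hfull ⟨hd, h2, h3, h4⟩ k hkL
    by_cases hi : k + 1 = Fin.last (n + 1)
    · rw [hi]
      have hc := aux_chain3 A hfull h2 0 k (Fin.last (n + 1)) (Fin.zero_le k) (le_of_lt hkL)
      linear_combination (A k (Fin.last (n + 1)) * A (Fin.last (n + 1)) (Fin.last (n + 1))) * e4
        + (A (Fin.last (n + 1)) 0 * A (Fin.last (n + 1)) (Fin.last (n + 1))) * hc
    · have hiL : k + 1 < Fin.last (n + 1) := lt_of_le_of_ne (Fin.le_last _) hi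
      have e3 := aux_h3' A hfull ⟨hd, h2, h3, h4⟩ (k + 1) k hk1 hi
      have hc1 := aux_chain3 A hfull h2 0 k (k + 1) (Fin.zero_le _) (le_of_lt hk1)
      have hc2 := aux_chain3 A hfull h2 0 (k + 1) (Fin.last (n + 1))
        (Fin.zero_le _) (le_of_lt hiL)
      linear_combination (A k (k + 1) * A 0 0) * e3
        + (A k (k + 1) * A (k + 1) (Fin.last (n + 1))) * e4
        + (A (Fin.last (n + 1)) 0 * A (k + 1) (Fin.last (n + 1))) * hc1
        + (A (Fin.last (n + 1)) 0 * A k k) * hc2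

lemma aux_chainN (hfull : ∀ i j, A i j ≠ 0) (hic : InvCyclic A) :
    ∀ m : ℕ, m ≤ n + 1 →
      A 0 ((m : ℕ) : Fin (n + 2)) * ∏ k ∈ Finset.range m, A ((k : ℕ) : Fin (n + 2)) ((k : ℕ) : Fin (n + 2))
        = A 0 0 * ∏ k ∈ Finset.range m, A ((k : ℕ) : Fin (n + 2)) ((k + 1 : ℕ) : Fin (n + 2)) := by
  obtain ⟨hd, h2, h3, h4⟩ := hic
  intro m
  induction m with
  | zero => simp
  | succ m ih =>
    intro hm
    have ihm := ih (by omega)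
    rw [Finset.prod_range_succ, Finset.prod_range_succ]
    have hle2 : ((m : ℕ) : Fin (n + 2)) ≤ ((m + 1 : ℕ) : Fin (n + 2)) := by
      rw [Fin.le_def, Fin.val_cast_of_lt (by omega), Fin.val_cast_of_lt (by omega)]
      omega
    have hc := aux_chain3 A hfull h2 0 ((m : ℕ) : Fin (n + 2)) ((m + 1 : ℕ) : Fin (n + 2))
      (Fin.zero_le _) hle2
    linear_combination (-(∏ k ∈ Finset.range m, A ((k : ℕ) : Fin (n + 2)) ((k : ℕ) : Fin (n + 2)))) * hc
      + A ((m : ℕ) : Fin (n + 2)) ((m + 1 : ℕ) : Fin (n + 2)) * ihm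

lemma aux_key4 (hfull : ∀ i j, A i j ≠ 0) (hic : InvCyclic A) :
    cycProd A * (A 0 0 * A (Fin.last (n + 1)) (Fin.last (n + 1)))
      = A (Fin.last (n + 1)) 0 * A 0 (Fin.last (n + 1)) * diagProd A := by
  have hcast1 : ((n + 1 : ℕ) : Fin (n + 2)) = Fin.last (n + 1) := by
    ext; rw [Fin.val_cast_of_lt (by omega)]; rfl
  have hcast2 : ((n + 2 : ℕ) : Fin (n + 2)) = 0 := by
    ext; simp [Fin.val_natCast]
  have hc : cycProd A = (∏ k ∈ Finset.range (n + 1),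
      A ((k : ℕ) : Fin (n + 2)) ((k + 1 : ℕ) : Fin (n + 2))) * A (Fin.last (n + 1)) 0 := by
    unfold cycProd
    rw [show (∏ i : Fin (n + 2), A i (i + 1))
        = ∏ i : Fin (n + 2), (fun k : ℕ => A ((k : ℕ) : Fin (n + 2)) ((k + 1 : ℕ) : Fin (n + 2))) i.val from
      Finset.prod_congr rfl fun i _ => by
        push_cast
        rfl]
    rw [Fin.prod_univ_eq_prod_range
      (fun k : ℕ => A ((k : ℕ) : Fin (n + 2)) ((k + 1 : ℕ) : Fin (n + 2))) (n + 2)]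
    rw [Finset.prod_range_succ, hcast1, hcast2]
  have hdp : diagProd A = (∏ k ∈ Finset.range (n + 1),
      A ((k : ℕ) : Fin (n + 2)) ((k : ℕ) : Fin (n + 2))) * A (Fin.last (n + 1)) (Fin.last (n + 1)) := by
    unfold diagProd
    rw [show (∏ i : Fin (n + 2), A i i)
        = ∏ i : Fin (n + 2), (fun k : ℕ => A ((k : ℕ) : Fin (n + 2)) ((k : ℕ) : Fin (n + 2))) i.val from
      Finset.prod_congr rfl fun i _ => by simp only [Fin.cast_val_eq_self]]
    rw [Fin.prod_univ_eq_prod_range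
      (fun k : ℕ => A ((k : ℕ) : Fin (n + 2)) ((k : ℕ) : Fin (n + 2))) (n + 2)]
    rw [Finset.prod_range_succ, hcast1]
  rw [hc, hdp]
  have hch := aux_chainN A hfull hic (n + 1) le_rfl
  rw [hcast1] at hch
  linear_combination (-(A (Fin.last (n + 1)) 0
    * A (Fin.last (n + 1)) (Fin.last (n + 1)))) * hch

end Aux

theorem stmt8 {n : ℕ} (A : Matrix (Fin (n + 2)) (Fin (n + 2)) ℝ) (hdet : A.det ≠ 0)
    (hfull : ∀ i j, A i j ≠ 0) (hic : InvCyclic A) :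
    (∀ i, A i i * A⁻¹ i i = diagProd A / (diagProd A - cycProd A)) ∧
    (∀ i : Fin (n + 1), A i.castSucc i.castSucc * A⁻¹ i.castSucc i.castSucc =
      A i.succ i.succ * A⁻¹ i.succ i.succ) := by
  set q : ℝ := A (Fin.last (n + 1)) 0 * A 0 (Fin.last (n + 1)) /
    (A 0 0 * A (Fin.last (n + 1)) (Fin.last (n + 1))) with hqdef
  set B₀ : Matrix (Fin (n + 2)) (Fin (n + 2)) ℝ :=
    fun k j => if j = k then 1 / A k k
      else if j = k + 1 then -(A k j) / (A k k * A j j) else 0 with hB₀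
  have hsub : ∀ j : Fin (n + 2), j - 1 + 1 = j := fun j => sub_add_cancel j 1
  have hne : ∀ j : Fin (n + 2), j - 1 ≠ j := by
    intro j
    simp [sub_eq_iff_eq_add]
  have hAB0 : A * B₀ = (1 - q) • (1 : Matrix (Fin (n + 2)) (Fin (n + 2)) ℝ) := by
    ext i j
    rw [Matrix.mul_apply]
    have hzero : ∀ x ∈ (Finset.univ : Finset (Fin (n + 2))),
        x ∉ ({j - 1, j} : Finset (Fin (n + 2))) → A i x * B₀ x j = 0 := by
      intro x _ hx
      simp only [Finset.mem_insert, Finset.mem_singleton, not_or] at hx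
      have h1 : j ≠ x := fun h => hx.2 h.symm
      have h2 : j ≠ x + 1 := by
        intro h
        exact hx.1 (by rw [h]; exact (add_sub_cancel_right x 1).symm)
      simp only [hB₀, if_neg h1, if_neg h2, mul_zero]
    rw [← Finset.sum_subset (Finset.subset_univ ({j - 1, j} : Finset (Fin (n + 2)))) hzero,
      Finset.sum_pair (hne j)]
    have hBjj : B₀ j j = 1 / A j j := by simp only [hB₀, if_pos rfl]
    have hBj1 : B₀ (j - 1) j = -(A (j - 1) j) / (A (j - 1) (j - 1) * A j j) := by
      simp only [hB₀, if_neg (hne j).symm, if_pos (hsub j).symm]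
    rw [hBjj, hBj1, Matrix.smul_apply, Matrix.one_apply]
    by_cases hij : i = j
    · subst hij
      rw [if_pos rfl]
      have hk2 := aux_key2 A hfull hic (i - 1)
      rw [hsub i] at hk2
      rw [hqdef]
      field_simp [hfull]
      have hZ : A 0 0 * A (Fin.last (n + 1)) (Fin.last (n + 1)) *
          ((A 0 0)⁻¹ * (A (Fin.last (n + 1)) (Fin.last (n + 1)))⁻¹) = 1 := by
        rw [mul_mul_mul_comm, mul_inv_cancel₀ (hfull 0 0), mul_inv_cancel₀ (hfull _ _), one_mul]
      linear_combination (-((A 0 0)⁻¹ * (A (Fin.last (n + 1)) (Fin.last (n + 1)))⁻¹)) * hk2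
        + (A i (i - 1) * A (i - 1) i - A (i - 1) (i - 1) * A i i) * hZ
    · rw [if_neg hij]
      have hk1 := aux_key1 A hfull hic i (j - 1) (by rw [hsub j]; exact hij)
      rw [hsub j] at hk1
      field_simp [hfull]
      linear_combination hk1
  have hq1 : q ≠ 1 := by
    intro h1
    have h0 : A * B₀ = 0 := by rw [hAB0, h1, sub_self, zero_smul]
    have hB0z : B₀ = 0 := by
      calc B₀ = (A⁻¹ * A) * B₀ := by
            rw [Matrix.nonsing_inv_mul A (isUnit_iff_ne_zero.mpr hdet), Matrix.one_mul]
        _ = A⁻¹ * (A * B₀) := Matrix.mul_assoc _ _ _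
        _ = 0 := by rw [h0, Matrix.mul_zero]
    have : B₀ 0 0 = 0 := by rw [hB0z]; rfl
    rw [hB₀] at this
    simp only [if_pos rfl] at this
    exact one_div_ne_zero (hfull 0 0) this
  have h1q : (1 : ℝ) - q ≠ 0 := sub_ne_zero.mpr (Ne.symm hq1)
  have hinv : A⁻¹ = (1 - q)⁻¹ • B₀ := by
    apply Matrix.inv_eq_right_inv
    rw [Matrix.mul_smul, hAB0, smul_smul, inv_mul_cancel₀ h1q, one_smul]
  have hd0 : diagProd A ≠ 0 :=
    Finset.prod_ne_zero_iff.mpr fun i _ => hfull i i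
  have hcq : cycProd A = q * diagProd A := by
    have hk4 := aux_key4 A hfull hic
    rw [hqdef]
    field_simp [hfull]
    linear_combination hk4
  have main1 : ∀ i, A i i * A⁻¹ i i = diagProd A / (diagProd A - cycProd A) := by
    intro i
    rw [hinv, Matrix.smul_apply]
    have hBii : B₀ i i = 1 / A i i := by simp only [hB₀, if_pos rfl]
    rw [hBii, hcq]
    rw [show diagProd A - q * diagProd A = (1 - q) * diagProd A by ring]
    rw [smul_eq_mul]
    field_simp [hfull i i, h1q, hd0]
  exact ⟨main1, fun i => (main1 _).trans (main1 _).symm⟩
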